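/- Let (u_n)_{n≥1} be regularly varying at infinity with index -γ, γ > 1, with u := ∑_{n≥1} u_n < 1, and define p_n := ∑_{k=1}^n (-1)^{k+1} u_n^{*(k)}. Then p_n / u_n → 1/(1+u)^2 as n → ∞. -/

import Mathlib

/-- Convolution of sequences indexed by the positive integers:
`(a*b)(n) = ∑_{j=1}^{n-1} a(j) b(n-j)`. -/
noncomputable def conv (a b : ℕ → ℝ) (n : ℕ) : ℝ :=
  ∑ j ∈ Finset.Ico 1 n, a j * b (n - j)

/-- `iterConv a k = a^{*(k)}` for `k ≥ 1`: `a^{*(1)} = a` and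
`a^{*(k+1)} = a^{*(k)} * a`. -/
noncomputable def iterConv (a : ℕ → ℝ) : ℕ → ℕ → ℝ
  | 0, n => if n = 0 then 1 else 0
  | k + 1, n => if k = 0 then a n else conv (iterConv a k) a n

/-- A positive sequence `a` is regularly varying at infinity with index `ρ`
if `a ⌊l·n⌋ / a n → l ^ ρ` for every `l > 0`. -/
def RegVar (a : ℕ → ℝ) (ρ : ℝ) : Prop :=
  ∀ l : ℝ, 0 < l →
    Filter.Tendsto (fun n : ℕ => a ⌊l * (n : ℝ)⌋₊ / a n) Filter.atTop
      (nhds (l ^ ρ))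

open Filter MeasureTheory Real Topology

section Key

variable {u : ℕ → ℝ} {γ : ℝ}

/-- pointwise log-form limit along a subsequence -/
lemma log_limit (hupos : ∀ n, 1 ≤ n → 0 < u n) (hrv : RegVar u (-γ))
    {t : ℝ} (ht : 0 ≤ t) {w : ℕ → ℕ} (hw : Tendsto w atTop atTop) :
    Tendsto (fun k => Real.log (u ⌊Real.exp t * (w k : ℝ)⌋₊) - Real.log (u (w k)) + γ * t)
      atTop (𝓝 0) := by
  have h1 : Tendsto (fun n : ℕ => u ⌊Real.exp t * (n : ℝ)⌋₊ / u n) atTop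
      (𝓝 ((Real.exp t) ^ (-γ))) := hrv _ (Real.exp_pos t)
  have h2 : Tendsto (fun n : ℕ => Real.log (u ⌊Real.exp t * (n : ℝ)⌋₊ / u n)) atTop
      (𝓝 (Real.log ((Real.exp t) ^ (-γ)))) := by
    exact (Real.continuousAt_log (by positivity)).tendsto.comp h1
  have h3 : Real.log ((Real.exp t) ^ (-γ)) = -(γ * t) := by
    rw [Real.log_rpow (Real.exp_pos t), Real.log_exp]; ring
  rw [h3] at h2
  have h4 : Tendsto (fun k => Real.log (u ⌊Real.exp t * (w k : ℝ)⌋₊ / u (w k))) atTop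
      (𝓝 (-(γ * t))) := h2.comp hw
  have h5 : ∀ᶠ k in atTop, Real.log (u ⌊Real.exp t * (w k : ℝ)⌋₊ / u (w k))
      = Real.log (u ⌊Real.exp t * (w k : ℝ)⌋₊) - Real.log (u (w k)) := by
    filter_upwards [hw.eventually_ge_atTop 1] with k hk
    have hwk : (1 : ℝ) ≤ (w k : ℝ) := by exact_mod_cast hk
    have hfl : 1 ≤ ⌊Real.exp t * (w k : ℝ)⌋₊ := by
      rw [Nat.one_le_floor_iff]
      nlinarith [Real.one_le_exp ht]
    exact Real.log_div (ne_of_gt (hupos _ hfl)) (ne_of_gt (hupos _ hk))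
  have h6 := (h4.congr' h5)
  have := h6.add_const (γ * t)
  simpa using this

/-- THE key uniform lemma -/
lemma keyUnif (hupos : ∀ n, 1 ≤ n → 0 < u n) (hγ : 0 < γ) (hrv : RegVar u (-γ)) :
    ∀ ε : ℝ, 0 < ε → ∃ N : ℕ, ∀ n, N ≤ n → ∀ m, n ≤ 2 * m → m ≤ n → 1 ≤ m →
      |u m / u n - ((m : ℝ) / n) ^ (-γ)| ≤ ε := by
  by_contra hcon
  push_neg at hcon
  obtain ⟨ε, hε, hc⟩ := hcon
  choose nn hnn mm h2m hmn hm1 hbig using hc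
  -- sequences
  have hn : Tendsto nn atTop atTop := tendsto_atTop_mono (fun k => hnn k) tendsto_id
  have hm : Tendsto mm atTop atTop := by
    apply tendsto_atTop_atTop.2
    intro b
    refine ⟨2 * b, fun k hk => ?_⟩
    have := h2m k
    have := hnn k
    omega
  set tp : ℝ := (2:ℝ) ^ γ with htp
  have htppos : 0 < tp := Real.rpow_pos_of_pos two_pos _
  set δ : ℝ := Real.log (1 + ε / (2 * tp)) / 2 with hδdef
  have hargpos : 0 < ε / (2 * tp) := by positivity
  have hδ : 0 < δ := by
    apply div_pos _ two_pos
    apply Real.log_pos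
    linarith
  set L : ℕ → ℝ := fun i => Real.log (u i) with hL
  set D : ℕ → Set ℝ := fun k => {t | |L ⌊Real.exp t * (nn k : ℝ)⌋₊ - L (nn k) + γ * t| ≤ δ ∧
    |L ⌊Real.exp t * (mm k : ℝ)⌋₊ - L (mm k) + γ * t| ≤ δ} with hD
  set E : ℕ → Set ℝ := fun N => Set.Icc 0 2 ∩ ⋂ j : ℕ, D (N + j) with hE
  have hDmeas : ∀ k, MeasurableSet (D k) := by
    intro k
    have hmf : ∀ c : ℕ, Measurable (fun t : ℝ => |L ⌊Real.exp t * (c : ℝ)⌋₊ - L c + γ * t|) := by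
      intro c
      apply Measurable.abs
      apply Measurable.add _ (measurable_const.mul measurable_id)
      apply Measurable.sub _ measurable_const
      exact (measurable_from_top (f := L)).comp
        (Nat.measurable_floor.comp (Real.measurable_exp.mul_const _))
    exact (measurableSet_le (hmf (nn k)) measurable_const).inter
      (measurableSet_le (hmf (mm k)) measurable_const)
  have hEmeas : ∀ N, MeasurableSet (E N) := fun N =>
    measurableSet_Icc.inter (MeasurableSet.iInter fun j => hDmeas _)
  have hEmono : Monotone E := by
    intro N N' hNN' t ht
    refine ⟨ht.1, ?_⟩
    rw [Set.mem_iInter]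
    intro j
    have := Set.mem_iInter.1 ht.2 (N' - N + j)
    have hidx : N + (N' - N + j) = N' + j := by omega
    rwa [hidx] at this
  have hcover : Set.Icc (0:ℝ) 2 ⊆ ⋃ N, E N := by
    intro t ht
    have ht0 : (0:ℝ) ≤ t := ht.1
    have e1 := log_limit hupos hrv ht0 hn
    have e2 := log_limit hupos hrv ht0 hm
    have g1 : ∀ᶠ k in atTop, |L ⌊Real.exp t * (nn k : ℝ)⌋₊ - L (nn k) + γ * t| ≤ δ := by
      have := Metric.tendsto_atTop.1 e1 δ hδ
      obtain ⟨N1, hN1⟩ := this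
      rw [eventually_atTop]
      exact ⟨N1, fun k hk => by
        have := hN1 k hk
        rw [Real.dist_eq, sub_zero] at this
        exact this.le⟩
    have g2 : ∀ᶠ k in atTop, |L ⌊Real.exp t * (mm k : ℝ)⌋₊ - L (mm k) + γ * t| ≤ δ := by
      have := Metric.tendsto_atTop.1 e2 δ hδ
      obtain ⟨N2, hN2⟩ := this
      rw [eventually_atTop]
      exact ⟨N2, fun k hk => by
        have := hN2 k hk
        rw [Real.dist_eq, sub_zero] at this
        exact this.le⟩
    obtain ⟨N, hN⟩ := eventually_atTop.1 (g1.and g2)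
    refine Set.mem_iUnion.2 ⟨N, ht, ?_⟩
    rw [Set.mem_iInter]
    intro j
    exact hN (N + j) (Nat.le_add_right _ _)
  -- measure argument
  set s : ℕ → Set ℝ := fun N => Set.Icc (0:ℝ) 2 \ E N with hs
  have hstend : Tendsto (volume ∘ s) atTop (𝓝 0) := by
    have h0 : (⋂ N, s N) = ∅ := by
      rw [hs]
      simp only [← Set.diff_iUnion]
      rw [Set.diff_eq_empty.2 hcover]
    have := tendsto_measure_iInter_atTop
      (fun N => ((measurableSet_Icc.diff (hEmeas N)).nullMeasurableSet))
      (fun N N' hNN' => Set.diff_subset_diff_right (hEmono hNN'))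
      ⟨0, by
        apply ne_of_lt
        calc volume (s 0) ≤ volume (Set.Icc (0:ℝ) 2) := measure_mono Set.diff_subset
        _ < ⊤ := by rw [Real.volume_Icc]; exact ENNReal.ofReal_lt_top⟩
    rwa [h0, measure_empty] at this
  have hev : ∀ᶠ N in atTop, (volume ∘ s) N < 1/4 :=
    hstend.eventually (Iio_mem_nhds (by norm_num))
  obtain ⟨N, hsN⟩ := hev.exists
  simp only [Function.comp_apply] at hsN
  -- pick a good point
  set n := nn N with hn'
  set m := mm N with hm'
  have hm1' : 1 ≤ m := hm1 N
  have hn1 : 1 ≤ n := le_trans hm1' (hmn N)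
  have hmpos : (0:ℝ) < (m:ℝ) := by exact_mod_cast hm1'
  have hnpos : (0:ℝ) < (n:ℝ) := by exact_mod_cast hn1
  set sr : ℝ := Real.log ((n:ℝ)/(m:ℝ)) with hsr
  have hnm1 : (1:ℝ) ≤ (n:ℝ)/(m:ℝ) := (one_le_div hmpos).2 (by exact_mod_cast hmn N)
  have hnm2 : (n:ℝ)/(m:ℝ) ≤ 2 := by
    rw [div_le_iff₀ hmpos]
    exact_mod_cast h2m N
  have hsr0 : 0 ≤ sr := Real.log_nonneg hnm1
  have hsrlog2 : sr ≤ Real.log 2 := Real.log_le_log (by linarith) hnm2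
  have hsr1 : sr ≤ 1 := le_trans hsrlog2 (by
    have := Real.log_two_lt_d9
    linarith)
  -- the good set is nonempty
  have hGne : ∃ t, t ∈ Set.Icc (0:ℝ) 1 ∧ t ∈ E N ∧ t + sr ∈ E N := by
    by_contra hGe
    push_neg at hGe
    have hsub : Set.Icc (0:ℝ) 1 ⊆ s N ∪ ((fun t => t + sr) ⁻¹' (s N)) := by
      intro t ht
      have ht02 : t ∈ Set.Icc (0:ℝ) 2 := ⟨ht.1, le_trans ht.2 one_le_two⟩
      by_cases h1 : t ∈ E N
      · by_cases h2 : t + sr ∈ E N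
        · exact absurd h2 (hGe t ht h1)
        · right
          have hmem : t + sr ∈ Set.Icc (0:ℝ) 2 := ⟨by linarith [ht.1], by linarith [ht.2]⟩
          exact ⟨hmem, h2⟩
      · left; exact ⟨ht02, h1⟩
    have hle : volume (Set.Icc (0:ℝ) 1) ≤ volume (s N) + volume ((fun t => t + sr) ⁻¹' (s N)) :=
      le_trans (measure_mono hsub) (measure_union_le _ _)
    rw [measure_preimage_add_right, Real.volume_Icc] at hle
    have hcontr : (ENNReal.ofReal (1 - 0)) ≤ 1/4 + 1/4 :=
      le_trans hle (add_le_add hsN.le hsN.le)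
    have hq : (1/4 + 1/4 : ENNReal) ≤ ENNReal.ofReal (1/2) := by
      rw [show ((1:ENNReal)/4) = ENNReal.ofReal (1/4) by
        rw [ENNReal.ofReal_div_of_pos] <;> norm_num]
      rw [← ENNReal.ofReal_add] <;> norm_num
    rw [show (1-0 : ℝ) = 1 by norm_num] at hcontr
    have := le_trans hcontr hq
    rw [ENNReal.ofReal_le_ofReal_iff (by norm_num)] at this
    norm_num at this
  obtain ⟨t, ht01, htE, htsE⟩ := hGne
  -- extract the two inequalities
  have hA1 : |L ⌊Real.exp t * (n : ℝ)⌋₊ - L n + γ * t| ≤ δ := by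
    have := Set.mem_iInter.1 htE.2 0
    simpa using this.1
  have hA2 : |L ⌊Real.exp (t+sr) * (m : ℝ)⌋₊ - L m + γ * (t+sr)| ≤ δ := by
    have := Set.mem_iInter.1 htsE.2 0
    simpa using this.2
  have hexact : Real.exp (t + sr) * (m:ℝ) = Real.exp t * (n:ℝ) := by
    rw [Real.exp_add, hsr, Real.exp_log (by linarith)]
    field_simp
  rw [hexact] at hA2
  have hkey : |L m - L n - γ * sr| ≤ 2 * δ := by
    have heq : L m - L n - γ * sr =
        (L ⌊Real.exp t * (n:ℝ)⌋₊ - L n + γ * t) - (L ⌊Real.exp t * (n:ℝ)⌋₊ - L m + γ * (t+sr)) := by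
      ring
    rw [heq]
    calc |(L ⌊Real.exp t * (n:ℝ)⌋₊ - L n + γ * t) - (L ⌊Real.exp t * (n:ℝ)⌋₊ - L m + γ * (t+sr))|
        ≤ |L ⌊Real.exp t * (n:ℝ)⌋₊ - L n + γ * t| + |L ⌊Real.exp t * (n:ℝ)⌋₊ - L m + γ * (t+sr)| :=
          abs_sub _ _
      _ ≤ 2 * δ := by linarith
  have hum : u m = Real.exp (L m) := (Real.exp_log (hupos m hm1')).symm
  have hun : u n = Real.exp (L n) := (Real.exp_log (hupos n hn1)).symm
  have hratio : u m / u n = Real.exp (L m - L n) := by rw [hum, hun, Real.exp_sub]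
  have hrp : ((m:ℝ)/n) ^ (-γ) = Real.exp (γ * sr) := by
    rw [Real.rpow_def_of_pos (by positivity)]
    congr 1
    rw [show (m:ℝ)/n = ((n:ℝ)/m)⁻¹ by field_simp, Real.log_inv]
    rw [← hsr]
    ring
  set θ := L m - L n - γ * sr with hθ
  have hdiff : u m / u n - ((m:ℝ)/n) ^ (-γ) = Real.exp (γ * sr) * (Real.exp θ - 1) := by
    rw [hratio, hrp, mul_sub, mul_one, ← Real.exp_add]
    congr 2
    rw [hθ]; ring
  have hexpθ : |Real.exp θ - 1| ≤ Real.exp (2*δ) - 1 := by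
    have hθle : θ ≤ 2*δ := le_of_abs_le hkey
    have hθge : -(2*δ) ≤ θ := neg_le_of_abs_le hkey
    rcases le_or_gt 1 (Real.exp θ) with h | h
    · rw [abs_of_nonneg (by linarith)]
      have := Real.exp_le_exp.2 hθle
      linarith
    · rw [abs_of_neg (by linarith)]
      have h1 : Real.exp (-(2*δ)) ≤ Real.exp θ := Real.exp_le_exp.2 hθge
      have h2 : 2 ≤ Real.exp (2*δ) + Real.exp (-(2*δ)) := by
        have hz : Real.exp (2*δ) * Real.exp (-(2*δ)) = 1 := by
          rw [← Real.exp_add]; simp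
        have hid : Real.exp (2*δ) + Real.exp (-(2*δ)) - 2
            = Real.exp (-(2*δ)) * (Real.exp (2*δ) - 1)^2 := by
          linear_combination (2 - Real.exp (2*δ)) * hz
        nlinarith [mul_nonneg (Real.exp_pos (-(2*δ))).le (sq_nonneg (Real.exp (2*δ) - 1))]
      linarith
  have hgs : Real.exp (γ * sr) ≤ tp := by
    rw [htp, Real.rpow_def_of_pos two_pos]
    apply Real.exp_le_exp.2
    rw [mul_comm (Real.log 2) γ]
    exact mul_le_mul_of_nonneg_left hsrlog2 hγ.le
  have hexp2δ : Real.exp (2*δ) - 1 = ε / (2*tp) := by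
    rw [hδdef, show 2 * (Real.log (1 + ε/(2*tp))/2) = Real.log (1 + ε/(2*tp)) by ring,
      Real.exp_log (by linarith)]
    ring
  have hfinal : |u m / u n - ((m:ℝ)/n) ^ (-γ)| ≤ ε / 2 := by
    rw [hdiff, abs_mul, abs_of_pos (Real.exp_pos _)]
    calc Real.exp (γ*sr) * |Real.exp θ - 1| ≤ tp * (ε/(2*tp)) := by
          apply mul_le_mul hgs (by rw [← hexp2δ]; exact hexpθ) (abs_nonneg _) (le_of_lt htppos)
      _ = ε/2 := by field_simp
  have hb := hbig N
  rw [← hn', ← hm'] at hb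
  linarith

end Key
section Part2

variable {u : ℕ → ℝ} {γ : ℝ}

/-- (F2): uniform ratio bound on the window `[n/2, n]`. -/
lemma ratio_bound (hupos : ∀ n, 1 ≤ n → 0 < u n) (hγ : 0 < γ) (hrv : RegVar u (-γ)) :
    ∃ C : ℝ, 1 ≤ C ∧ ∃ N : ℕ, 1 ≤ N ∧ ∀ n, N ≤ n → ∀ m, n ≤ 2 * m → m ≤ n →
      u m ≤ C * u n := by
  obtain ⟨N, hN⟩ := keyUnif hupos hγ hrv 1 one_pos
  have htp : (0:ℝ) < (2:ℝ) ^ γ := Real.rpow_pos_of_pos two_pos _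
  refine ⟨(2:ℝ) ^ γ + 1, by linarith, max N 1, le_max_right _ _, ?_⟩
  intro n hn m h2m hmn
  have hn1 : 1 ≤ n := le_trans (le_max_right _ _) hn
  have hm1 : 1 ≤ m := by omega
  have hkey := hN n (le_trans (le_max_left _ _) hn) m h2m hmn hm1
  have hmpos : (0:ℝ) < (m:ℝ) := by exact_mod_cast hm1
  have hnpos : (0:ℝ) < (n:ℝ) := by exact_mod_cast hn1
  have hrle : ((m:ℝ)/n) ^ (-γ) ≤ (2:ℝ) ^ γ := by
    rw [Real.rpow_neg (by positivity), ← Real.inv_rpow (by positivity)]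
    apply Real.rpow_le_rpow (by positivity) _ hγ.le
    rw [inv_div, div_le_iff₀ hmpos]
    have : (n:ℝ) ≤ 2 * m := by exact_mod_cast h2m
    linarith
  have hun : 0 < u n := hupos n hn1
  have hdiv : u m / u n ≤ (2:ℝ)^γ + 1 := by
    have := (abs_le.1 hkey).2
    linarith
  calc u m = (u m / u n) * u n := by field_simp
    _ ≤ ((2:ℝ)^γ + 1) * u n := mul_le_mul_of_nonneg_right hdiv hun.le

/-- (F1): fixed-shift ratio tends to 1. -/
lemma ratio_tendsto (hupos : ∀ n, 1 ≤ n → 0 < u n) (hγ : 0 < γ) (hrv : RegVar u (-γ))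
    (j : ℕ) : Tendsto (fun n => u (n - j) / u n) atTop (𝓝 1) := by
  have hfrac : Tendsto (fun n : ℕ => (((n - j : ℕ):ℝ))/(n:ℝ)) atTop (𝓝 1) := by
    have h1 : Tendsto (fun n : ℕ => 1 - (j:ℝ)/(n:ℝ)) atTop (𝓝 1) := by
      have := tendsto_const_div_atTop_nhds_zero_nat (j:ℝ)
      have h2 := (tendsto_const_nhds (x := (1:ℝ)) (f := atTop)).sub this
      simpa using h2
    apply h1.congr'
    filter_upwards [eventually_ge_atTop (max j 1)] with n hn
    have hj : j ≤ n := le_trans (le_max_left _ _) hn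
    have hn1 : 1 ≤ n := le_trans (le_max_right _ _) hn
    have hnne : (n:ℝ) ≠ 0 := Nat.cast_ne_zero.2 (by omega)
    rw [Nat.cast_sub hj]
    field_simp
  have hpow : Tendsto (fun n : ℕ => (((n - j : ℕ):ℝ)/(n:ℝ)) ^ (-γ)) atTop (𝓝 1) := by
    have hc : ContinuousAt (fun x : ℝ => x ^ (-γ)) 1 :=
      Real.continuousAt_rpow_const 1 (-γ) (Or.inl one_ne_zero)
    have := hc.tendsto.comp hfrac
    simpa [Real.one_rpow, Function.comp_def] using this
  rw [Metric.tendsto_atTop]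
  intro ε hε
  obtain ⟨N, hN⟩ := keyUnif hupos hγ hrv (ε/2) (by linarith)
  obtain ⟨N2, hN2⟩ := Metric.tendsto_atTop.1 hpow (ε/2) (by linarith)
  refine ⟨max (max N N2) (2*j + 1), fun n hn => ?_⟩
  have hnN : N ≤ n := le_trans (le_trans (le_max_left _ _) (le_max_left _ _)) hn
  have hnN2 : N2 ≤ n := le_trans (le_trans (le_max_right _ _) (le_max_left _ _)) hn
  have hn2j : 2*j + 1 ≤ n := le_trans (le_max_right _ _) hn
  have hm1 : 1 ≤ n - j := by omega
  have h2m : n ≤ 2 * (n - j) := by omega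
  have hkey := hN n hnN (n - j) h2m (by omega) hm1
  have hp := hN2 n hnN2
  rw [Real.dist_eq] at hp ⊢
  calc |u (n-j)/u n - 1| ≤ |u (n-j)/u n - (((n-j:ℕ):ℝ)/(n:ℝ))^(-γ)|
        + |(((n-j:ℕ):ℝ)/(n:ℝ))^(-γ) - 1| := abs_sub_le _ _ _
    _ < ε/2 + ε/2 := by
        apply add_lt_add_of_le_of_lt hkey hp
    _ = ε := by ring

end Part2
section Part3

variable {u : ℕ → ℝ}

lemma u_nonneg (hu0 : u 0 = 0) (hupos : ∀ n, 1 ≤ n → 0 < u n) : ∀ n, 0 ≤ u n := by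
  intro n
  cases n with
  | zero => simp [hu0]
  | succ n => exact (hupos _ (Nat.succ_le_succ (Nat.zero_le _))).le

lemma iterConv_one (n : ℕ) : iterConv u 1 n = u n := by simp [iterConv]

lemma iterConv_succ {k : ℕ} (hk : 1 ≤ k) (n : ℕ) :
    iterConv u (k+1) n = ∑ j ∈ Finset.Ico 1 n, iterConv u k j * u (n - j) := by
  match k, hk with
  | k+1, _ => simp [iterConv, conv]

lemma iterConv_nonneg (hu0 : u 0 = 0) (hupos : ∀ n, 1 ≤ n → 0 < u n) :
    ∀ k, 1 ≤ k → ∀ n, 0 ≤ iterConv u k n := by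
  intro k
  induction k with
  | zero => omega
  | succ k ih =>
    intro _ n
    rcases Nat.eq_zero_or_pos k with hk0 | hk1
    · subst hk0; rw [iterConv_one]; exact u_nonneg hu0 hupos n
    · rw [iterConv_succ hk1]
      apply Finset.sum_nonneg
      intro j hj
      exact mul_nonneg (ih hk1 j) (u_nonneg hu0 hupos _)

lemma iterConv_eq_zero (hu0 : u 0 = 0) :
    ∀ k, 1 ≤ k → ∀ n, n < k → iterConv u k n = 0 := by
  intro k
  induction k with
  | zero => omega
  | succ k ih =>
    intro _ n hn
    rcases Nat.eq_zero_or_pos k with hk0 | hk1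
    · subst hk0
      interval_cases n
      rw [iterConv_one]; exact hu0
    · rw [iterConv_succ hk1]
      apply Finset.sum_eq_zero
      intro j hj
      rw [Finset.mem_Ico] at hj
      have : j < k := by omega
      rw [ih hk1 j this, zero_mul]

lemma iterConv_antidiagonal (hu0 : u 0 = 0) {k : ℕ} (hk : 1 ≤ k) (n : ℕ) :
    iterConv u (k+1) n = ∑ kl ∈ Finset.HasAntidiagonal.antidiagonal n, iterConv u k kl.1 * u kl.2 := by
  rw [iterConv_succ hk n, Finset.Nat.sum_antidiagonal_eq_sum_range_succ_mk]
  apply Finset.sum_subset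
  · intro j hj
    rw [Finset.mem_Ico] at hj
    exact Finset.mem_range.2 (by omega)
  · intro x hx hnx
    rw [Finset.mem_range] at hx
    rw [Finset.mem_Ico] at hnx
    push_neg at hnx
    rcases Nat.eq_zero_or_pos x with h0 | h1
    · subst h0
      rw [iterConv_eq_zero hu0 k hk 0 (by omega), zero_mul]
    · have : x = n := by omega
      subst this
      simp [hu0]

lemma iterConv_hasSum (hu0 : u 0 = 0) (hupos : ∀ n, 1 ≤ n → 0 < u n) (husum : Summable u) :
    ∀ k, 1 ≤ k → HasSum (iterConv u k) ((∑' n, u n)^k) := by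
  intro k
  induction k with
  | zero => omega
  | succ k ih =>
    intro _
    rcases Nat.eq_zero_or_pos k with hk0 | hk1
    · subst hk0
      have : iterConv u 1 = u := funext iterConv_one
      rw [this, pow_one]
      exact husum.hasSum
    · have ihs := ih hk1
      have hanorm : Summable fun x => ‖iterConv u k x‖ := by
        apply ihs.summable.congr
        intro n
        rw [Real.norm_eq_abs, abs_of_nonneg (iterConv_nonneg hu0 hupos k hk1 n)]
      have hunorm : Summable fun x => ‖u x‖ := by
        apply husum.congr
        intro n
        rw [Real.norm_eq_abs, abs_of_nonneg (u_nonneg hu0 hupos n)]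
      have hsummable : Summable (iterConv u (k+1)) := by
        have := summable_sum_mul_antidiagonal_of_summable_norm' hanorm ihs.summable hunorm husum
        apply this.congr
        intro n
        exact (iterConv_antidiagonal hu0 hk1 n).symm
      have htsum := tsum_mul_tsum_eq_tsum_sum_antidiagonal_of_summable_norm hanorm hunorm
      rw [ihs.tsum_eq] at htsum
      rw [(hsummable.hasSum_iff)]
      rw [show ∑' n, iterConv u (k+1) n = ∑' n, ∑ kl ∈ Finset.HasAntidiagonal.antidiagonal n,
        iterConv u k kl.1 * u kl.2 from tsum_congr (fun n => iterConv_antidiagonal hu0 hk1 n)]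
      rw [← htsum, pow_succ]

lemma iterConv_sum_le (hu0 : u 0 = 0) (hupos : ∀ n, 1 ≤ n → 0 < u n) (husum : Summable u)
    {k : ℕ} (hk : 1 ≤ k) (s : Finset ℕ) :
    ∑ n ∈ s, iterConv u k n ≤ (∑' n, u n)^k :=
  sum_le_hasSum s (fun i _ => iterConv_nonneg hu0 hupos k hk i)
    (iterConv_hasSum hu0 hupos husum k hk)

lemma iterConv_le (hu0 : u 0 = 0) (hupos : ∀ n, 1 ≤ n → 0 < u n) (husum : Summable u)
    {k : ℕ} (hk : 1 ≤ k) (n : ℕ) : iterConv u k n ≤ (∑' n, u n)^k := by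
  have := iterConv_sum_le hu0 hupos husum hk {n}
  simpa using this

lemma U_pos (hu0 : u 0 = 0) (hupos : ∀ n, 1 ≤ n → 0 < u n) (husum : Summable u) :
    0 < ∑' n, u n :=
  lt_of_lt_of_le (hupos 1 le_rfl) (Summable.le_tsum husum 1 (fun j _ => u_nonneg hu0 hupos j))

end Part3

section Part4

variable {u : ℕ → ℝ} {γ : ℝ}

/-- The "first half" sum converges to the full sum of `w`. -/
lemma S1gen (hu0 : u 0 = 0) (hupos : ∀ n, 1 ≤ n → 0 < u n) (hγ : 0 < γ) (hrv : RegVar u (-γ))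
    {w : ℕ → ℝ} (hw0 : w 0 = 0) (hwnn : ∀ n, 0 ≤ w n) (hwsum : Summable w) :
    Tendsto (fun n => ∑' j : ℕ, (if 1 ≤ j ∧ 2*j ≤ n then w j * u (n - j) / u n else 0))
      atTop (𝓝 (∑' j, w j)) := by
  obtain ⟨C, hC1, N, hN1, hCN⟩ := ratio_bound hupos hγ hrv
  apply tendsto_tsum_of_dominated_convergence (bound := fun j => C * w j)
    (hwsum.mul_left C)
  · intro j
    by_cases hj : 1 ≤ j
    · have h1 : Tendsto (fun n : ℕ => w j * (u (n - j) / u n)) atTop (𝓝 (w j * 1)) :=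
        tendsto_const_nhds.mul (ratio_tendsto hupos hγ hrv j)
      rw [mul_one] at h1
      apply h1.congr'
      filter_upwards [eventually_ge_atTop (2*j)] with n hn
      rw [if_pos ⟨hj, hn⟩]
      ring
    · have hj0 : j = 0 := by omega
      subst hj0
      have heq : (fun n : ℕ => if 1 ≤ (0:ℕ) ∧ 2*0 ≤ n then w 0 * u (n - 0) / u n else 0)
          = fun _ : ℕ => (0:ℝ) := by
        funext n
        rw [if_neg (by omega)]
      rw [heq, hw0]
      exact tendsto_const_nhds
  · filter_upwards [eventually_ge_atTop N] with n hn
    intro j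
    split_ifs with h
    · obtain ⟨hj1, hj2⟩ := h
      have hn1 : 1 ≤ n := le_trans hN1 hn
      have hm1 : 1 ≤ n - j := by omega
      have h2m : n ≤ 2*(n-j) := by omega
      have hub := hCN n hn (n-j) h2m (by omega)
      have hun := hupos n hn1
      have hnn : 0 ≤ w j * u (n-j) / u n :=
        div_nonneg (mul_nonneg (hwnn j) (u_nonneg hu0 hupos _)) hun.le
      rw [Real.norm_eq_abs, abs_of_nonneg hnn, div_le_iff₀ hun]
      have := mul_le_mul_of_nonneg_left hub (hwnn j)
      linarith
    · rw [norm_zero]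
      exact mul_nonneg (by linarith) (hwnn j)

end Part4
section Part5

variable {u : ℕ → ℝ} {γ : ℝ}

/-- algebraic split of the convolution ratio -/
lemma split_eq (hu0 : u 0 = 0) {k : ℕ} (hk : 1 ≤ k) (n : ℕ) :
    iterConv u (k+1) n / u n =
      (∑' j : ℕ, (if 1 ≤ j ∧ 2*j ≤ n then iterConv u k j * u (n - j) / u n else 0))
      + (∑' m : ℕ, (if 1 ≤ m ∧ 2*m < n then u m * iterConv u k (n - m) / u n else 0)) := by
  have h1 : (∑' j : ℕ, (if 1 ≤ j ∧ 2*j ≤ n then iterConv u k j * u (n - j) / u n else 0))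
      = ∑ j ∈ (Finset.Ico 1 n).filter (fun j => 2*j ≤ n),
          iterConv u k j * u (n - j) / u n := by
    rw [tsum_eq_sum (s := (Finset.Ico 1 n).filter (fun j => 2*j ≤ n)) ?_]
    · apply Finset.sum_congr rfl
      intro j hj
      rw [Finset.mem_filter, Finset.mem_Ico] at hj
      rw [if_pos ⟨hj.1.1, hj.2⟩]
    · intro b hb
      rw [Finset.mem_filter, Finset.mem_Ico] at hb
      rw [if_neg]
      intro hcond
      exact hb ⟨⟨hcond.1, by omega⟩, hcond.2⟩
  have h2 : (∑' m : ℕ, (if 1 ≤ m ∧ 2*m < n then u m * iterConv u k (n - m) / u n else 0))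
      = ∑ m ∈ (Finset.Ico 1 n).filter (fun m => 2*m < n),
          u m * iterConv u k (n - m) / u n := by
    rw [tsum_eq_sum (s := (Finset.Ico 1 n).filter (fun m => 2*m < n)) ?_]
    · apply Finset.sum_congr rfl
      intro m hm
      rw [Finset.mem_filter, Finset.mem_Ico] at hm
      rw [if_pos ⟨hm.1.1, hm.2⟩]
    · intro b hb
      rw [Finset.mem_filter, Finset.mem_Ico] at hb
      rw [if_neg]
      intro hcond
      exact hb ⟨⟨hcond.1, by omega⟩, hcond.2⟩
  rw [h1, h2, iterConv_succ hk n, Finset.sum_div]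
  rw [← Finset.sum_filter_add_sum_filter_not (Finset.Ico 1 n) (fun j => 2*j ≤ n)
    (fun j => iterConv u k j * u (n - j) / u n)]
  congr 1
  apply Finset.sum_nbij' (i := fun j => n - j) (j := fun m => n - m)
  · intro a ha
    rw [Finset.mem_filter, Finset.mem_Ico] at ha ⊢
    omega
  · intro a ha
    rw [Finset.mem_filter, Finset.mem_Ico] at ha ⊢
    omega
  · intro a ha
    rw [Finset.mem_filter, Finset.mem_Ico] at ha
    omega
  · intro a ha
    rw [Finset.mem_filter, Finset.mem_Ico] at ha
    omega
  · intro a ha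
    rw [Finset.mem_filter, Finset.mem_Ico] at ha
    have : n - (n - a) = a := by omega
    rw [this, mul_comm]

/-- pointwise bound `iterConv u k j ≤ D * u j` from the inductive limit -/
lemma exists_ratio_bound {k : ℕ} (hu0 : u 0 = 0) (hupos : ∀ n, 1 ≤ n → 0 < u n)
    (hk : 1 ≤ k) {L : ℝ} (hL : 0 ≤ L)
    (ihl : Tendsto (fun n => iterConv u k n / u n) atTop (𝓝 L)) :
    ∃ D : ℝ, 0 ≤ D ∧ ∀ j, 1 ≤ j → iterConv u k j ≤ D * u j := by
  have hev : ∀ᶠ n in atTop, iterConv u k n / u n < L + 1 :=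
    ihl.eventually (Iio_mem_nhds (lt_add_one L))
  obtain ⟨ND, hND⟩ := eventually_atTop.1 hev
  set D := (L + 1) + ∑ j ∈ Finset.Ico 1 ND, iterConv u k j / u j with hDdef
  have hsum_nonneg : 0 ≤ ∑ j ∈ Finset.Ico 1 ND, iterConv u k j / u j := by
    apply Finset.sum_nonneg
    intro j hj
    rw [Finset.mem_Ico] at hj
    exact div_nonneg (iterConv_nonneg hu0 hupos k hk j) (hupos j hj.1).le
  refine ⟨D, by rw [hDdef]; linarith, ?_⟩
  intro j hj
  have huj := hupos j hj
  have hratio : iterConv u k j / u j ≤ D := by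
    rcases le_or_gt ND j with h | h
    · have := (hND j h).le
      linarith
    · have hmem : j ∈ Finset.Ico 1 ND := Finset.mem_Ico.2 ⟨hj, h⟩
      have := Finset.single_le_sum (f := fun j => iterConv u k j / u j)
        (fun i hi => by
          rw [Finset.mem_Ico] at hi
          exact div_nonneg (iterConv_nonneg hu0 hupos k hk i) (hupos i hi.1).le) hmem
      linarith
  calc iterConv u k j = (iterConv u k j / u j) * u j := by field_simp
    _ ≤ D * u j := mul_le_mul_of_nonneg_right hratio huj.le

/-- L1: the main inductive limit -/
lemma iterConv_tendsto (hu0 : u 0 = 0) (hupos : ∀ n, 1 ≤ n → 0 < u n) (hγ : 0 < γ)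
    (hrv : RegVar u (-γ)) (husum : Summable u) :
    ∀ k, 1 ≤ k → Tendsto (fun n => iterConv u k n / u n) atTop
      (𝓝 ((k:ℝ) * (∑' i, u i)^(k-1))) := by
  have hUnn : (0:ℝ) ≤ ∑' i, u i := tsum_nonneg (u_nonneg hu0 hupos)
  intro k
  induction k with
  | zero => omega
  | succ k ih =>
    intro _
    rcases Nat.eq_zero_or_pos k with hk0 | hk1
    · subst hk0
      have heq : ∀ᶠ n in atTop, iterConv u 1 n / u n = 1 := by
        filter_upwards [eventually_ge_atTop 1] with n hn
        rw [iterConv_one, div_self (hupos n hn).ne']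
      have : Tendsto (fun n => iterConv u 1 n / u n) atTop (𝓝 1) :=
        Tendsto.congr' (by filter_upwards [heq] with n h; exact h.symm) tendsto_const_nhds
      simpa using this
    · have ihl := ih hk1
      set U := ∑' i, u i with hU
      set L := (k:ℝ) * U^(k-1) with hLdef
      have hL : 0 ≤ L := mul_nonneg (Nat.cast_nonneg _) (pow_nonneg hUnn _)
      obtain ⟨D, hD0, hD⟩ := exists_ratio_bound hu0 hupos hk1 hL ihl
      obtain ⟨C, hC1, N, hN1, hCN⟩ := ratio_bound hupos hγ hrv
      -- S1
      have hs1 : Tendsto (fun n => ∑' j : ℕ,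
          (if 1 ≤ j ∧ 2*j ≤ n then iterConv u k j * u (n - j) / u n else 0)) atTop
          (𝓝 (U^k)) := by
        have hhs := iterConv_hasSum hu0 hupos husum k hk1
        have := S1gen hu0 hupos hγ hrv (w := iterConv u k)
          (iterConv_eq_zero hu0 k hk1 0 hk1) (iterConv_nonneg hu0 hupos k hk1) hhs.summable
        rwa [hhs.tsum_eq] at this
      -- S2
      have hs2 : Tendsto (fun n => ∑' m : ℕ,
          (if 1 ≤ m ∧ 2*m < n then u m * iterConv u k (n - m) / u n else 0)) atTop
          (𝓝 (∑' m, u m * L)) := by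
        apply tendsto_tsum_of_dominated_convergence (bound := fun m => (D * C) * u m)
          ((husum.mul_left (D * C)))
        · intro m
          by_cases hm : 1 ≤ m
          · have hcomp : Tendsto (fun n : ℕ => n - m) atTop atTop := by
              apply tendsto_atTop_atTop.2
              intro b
              exact ⟨b + m, fun a ha => by omega⟩
            have h1 : Tendsto (fun n : ℕ => iterConv u k (n - m) / u (n - m)) atTop (𝓝 L) :=
              ihl.comp hcomp
            have h2 : Tendsto (fun n : ℕ => u (n - m) / u n) atTop (𝓝 1) :=
              ratio_tendsto hupos hγ hrv m
            have h3 : Tendsto (fun n : ℕ =>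
                u m * ((iterConv u k (n - m) / u (n - m)) * (u (n - m) / u n))) atTop
                (𝓝 (u m * (L * 1))) := tendsto_const_nhds.mul (h1.mul h2)
            rw [mul_one] at h3
            apply h3.congr'
            filter_upwards [eventually_ge_atTop (2*m + 1)] with n hn
            have hnm1 : 1 ≤ n - m := by omega
            have hune := (hupos (n-m) hnm1).ne'
            rw [if_pos ⟨hm, by omega⟩]
            field_simp
          · have hm0 : m = 0 := by omega
            subst hm0
            have heq : (fun n : ℕ => if 1 ≤ (0:ℕ) ∧ 2*0 < n then
                u 0 * iterConv u k (n - 0) / u n else 0) = fun _ : ℕ => (0:ℝ) := by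
              funext n
              rw [if_neg (by omega)]
            rw [heq, hu0, zero_mul]
            exact tendsto_const_nhds
        · filter_upwards [eventually_ge_atTop N] with n hn
          intro m
          split_ifs with h
          · obtain ⟨hm1, hm2⟩ := h
            have hn1 : 1 ≤ n := le_trans hN1 hn
            have hnm1 : 1 ≤ n - m := by omega
            have hub := hCN n hn (n - m) (by omega) (by omega)
            have hic := hD (n - m) hnm1
            have hun := hupos n hn1
            have hnn : 0 ≤ u m * iterConv u k (n-m) / u n :=
              div_nonneg (mul_nonneg (u_nonneg hu0 hupos m)
                (iterConv_nonneg hu0 hupos k hk1 _)) hun.le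
            rw [Real.norm_eq_abs, abs_of_nonneg hnn, div_le_iff₀ hun]
            have hum := u_nonneg hu0 hupos m
            have huD := mul_le_mul_of_nonneg_left hic hum
            have hCu := mul_le_mul_of_nonneg_left hub (mul_nonneg hum hD0)
            calc u m * iterConv u k (n-m) ≤ u m * (D * u (n-m)) := huD
              _ = (u m * D) * u (n-m) := by ring
              _ ≤ (u m * D) * (C * u n) := by
                  apply mul_le_mul_of_nonneg_left hub (mul_nonneg hum hD0)
              _ = D * C * u m * u n := by ring
          · rw [norm_zero]
            have hum := u_nonneg hu0 hupos m
            positivity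
      -- combine
      have hsplit : (fun n => iterConv u (k+1) n / u n) = fun n =>
          (∑' j : ℕ, (if 1 ≤ j ∧ 2*j ≤ n then iterConv u k j * u (n - j) / u n else 0))
          + (∑' m : ℕ, (if 1 ≤ m ∧ 2*m < n then u m * iterConv u k (n - m) / u n else 0)) := by
        funext n
        exact split_eq hu0 hk1 n
      rw [hsplit]
      have htot := hs1.add hs2
      have hval : U^k + (∑' m, u m * L) = ((k+1:ℕ):ℝ) * U^((k+1)-1) := by
        rw [tsum_mul_right, ← hU, hLdef]
        rcases Nat.exists_eq_add_of_le hk1 with ⟨k', rfl⟩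
        have h1 : (1 + k') - 1 = k' := by omega
        have h2 : (1 + k' + 1) - 1 = k' + 1 := by omega
        rw [h1, h2]
        push_cast
        ring
      rwa [hval] at htot

end Part5
section Part6

variable {u : ℕ → ℝ} {γ : ℝ}

lemma sum_tail_le (hu0 : u 0 = 0) (hupos : ∀ n, 1 ≤ n → 0 < u n) (husum : Summable u)
    (T : ℕ) (s : Finset ℕ) (hs : ∀ j ∈ s, T ≤ j) :
    ∑ j ∈ s, u j ≤ ∑' m, u (m + T) := by
  have hsummm : Summable (fun m => u (m + T)) := (summable_nat_add_iff T).2 husum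
  have heq : ∑ j ∈ s, u j = ∑ i ∈ s.image (fun j => j - T), u (i + T) := by
    rw [Finset.sum_image]
    · apply Finset.sum_congr rfl
      intro j hj
      congr 1
      have := hs j hj
      omega
    · intro a ha b hb hab
      have := hs a ha
      have := hs b hb
      have hab' : a - T = b - T := hab
      omega
  rw [heq]
  exact Summable.sum_le_tsum _ (fun i _ => u_nonneg hu0 hupos _) hsummm

lemma tsum_half_eq (n : ℕ) (hun : u n ≠ 0) :
    (∑' m : ℕ, (if 1 ≤ m ∧ 2*m < n then u m * u (n - m) / u n else 0)) * u n
      = ∑ m ∈ (Finset.Ico 1 n).filter (fun m => 2*m < n), u m * u (n - m) := by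
  have h2 : (∑' m : ℕ, (if 1 ≤ m ∧ 2*m < n then u m * u (n - m) / u n else 0))
      = ∑ m ∈ (Finset.Ico 1 n).filter (fun m => 2*m < n), u m * u (n - m) / u n := by
    rw [tsum_eq_sum (s := (Finset.Ico 1 n).filter (fun m => 2*m < n)) ?_]
    · apply Finset.sum_congr rfl
      intro m hm
      rw [Finset.mem_filter, Finset.mem_Ico] at hm
      rw [if_pos ⟨hm.1.1, hm.2⟩]
    · intro b hb
      rw [Finset.mem_filter, Finset.mem_Ico] at hb
      rw [if_neg]
      intro hcond
      exact hb ⟨⟨hcond.1, by omega⟩, hcond.2⟩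
  rw [h2, Finset.sum_mul]
  apply Finset.sum_congr rfl
  intro m hm
  exact div_mul_cancel₀ _ hun

lemma kesten (hu0 : u 0 = 0) (hupos : ∀ n, 1 ≤ n → 0 < u n) (hγ : 0 < γ)
    (hrv : RegVar u (-γ)) (husum : Summable u) (hult : (∑' n, u n) < 1) :
    ∃ B : ℝ, 0 < B ∧ ∃ r : ℝ, 0 < r ∧ r < 1 ∧ ∀ k, 1 ≤ k → ∀ n, 1 ≤ n →
      iterConv u k n ≤ B * k * r^k * u n := by
  set U := ∑' n, u n with hU
  have hU0 : 0 < U := U_pos hu0 hupos husum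
  set r : ℝ := (1 + U)/2 with hr
  have hrU : U < r := by rw [hr]; linarith
  have hr1 : r < 1 := by rw [hr]; linarith
  have hr0 : 0 < r := by rw [hr]; linarith
  obtain ⟨C, hC1, N, hN1, hCN⟩ := ratio_bound hupos hγ hrv
  have hCpos : 0 < C := lt_of_lt_of_le one_pos hC1
  -- limits for the two halves of (u*u)/u
  have hT1 : Tendsto (fun n => ∑' j : ℕ, (if 1 ≤ j ∧ 2*j ≤ n then u j * u (n-j)/u n else 0))
      atTop (𝓝 U) := S1gen hu0 hupos hγ hrv hu0 (u_nonneg hu0 hupos) husum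
  have hsplit2 : ∀ n : ℕ, iterConv u 2 n / u n
      = (∑' j : ℕ, (if 1 ≤ j ∧ 2*j ≤ n then u j * u (n-j)/u n else 0))
      + (∑' m : ℕ, (if 1 ≤ m ∧ 2*m < n then u m * u (n-m)/u n else 0)) := by
    intro n
    have h := split_eq hu0 (k := 1) le_rfl n
    simpa [iterConv_one] using h
  have hT2 : Tendsto (fun n => ∑' m : ℕ, (if 1 ≤ m ∧ 2*m < n then u m * u (n-m)/u n else 0))
      atTop (𝓝 U) := by
    have h2 := iterConv_tendsto hu0 hupos hγ hrv husum 2 (by norm_num)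
    rw [← hU] at h2
    have hsub := h2.sub hT1
    have hvv : ((2:ℕ):ℝ) * U^(2-1) - U = U := by push_cast; ring
    rw [hvv] at hsub
    apply hsub.congr
    intro n
    rw [hsplit2 n]
    ring
  -- choice of T and N2
  have htail : Tendsto (fun T : ℕ => ∑' m, u (m + T)) atTop (𝓝 0) := tendsto_sum_nat_add u
  obtain ⟨T, hTtail⟩ : ∃ T : ℕ, ∑' m, u (m + T) ≤ (r - U)/(2*C) := by
    have := htail.eventually (Iio_mem_nhds (show (0:ℝ) < (r-U)/(2*C) from div_pos (by linarith) (by positivity)))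
    obtain ⟨T, hT⟩ := this.exists
    exact ⟨T, hT.le⟩
  obtain ⟨N2, hN2⟩ := eventually_atTop.1
    (hT2.eventually (Iio_mem_nhds (show U < U + (r-U)/2 by linarith)))
  set N0 := max (max N N2) (2*T + 2) with hN0
  have hN01 : 1 ≤ N0 := by
    have : 2*T + 2 ≤ N0 := le_max_right _ _
    omega
  -- minimum of u on [1, N0]
  obtain ⟨a, ha, hmin⟩ := Finset.exists_min_image (Finset.Icc 1 N0) u
    ⟨1, Finset.mem_Icc.2 ⟨le_rfl, hN01⟩⟩
  set μ0 := u a with hμ0def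
  have hμ0 : 0 < μ0 := hupos a (Finset.mem_Icc.1 ha).1
  have hμmin : ∀ m, 1 ≤ m → m ≤ N0 → μ0 ≤ u m :=
    fun m h1 h2 => hmin m (Finset.mem_Icc.2 ⟨h1, h2⟩)
  -- the constant B
  set B := max (max (1/r) (C/r)) (1/μ0) with hB
  have hB1 : 1/r ≤ B := le_trans (le_max_left _ _) (le_max_left _ _)
  have hBC : C/r ≤ B := le_trans (le_max_right _ _) (le_max_left _ _)
  have hBμ : 1/μ0 ≤ B := le_max_right _ _
  have hBpos : 0 < B := lt_of_lt_of_le (by positivity) hB1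
  have hBr : 1 ≤ B * r := by
    have := mul_le_mul_of_nonneg_right hB1 hr0.le
    rwa [one_div, inv_mul_cancel₀ hr0.ne'] at this
  have hCBr : C ≤ B * r := by
    have := mul_le_mul_of_nonneg_right hBC hr0.le
    rwa [div_mul_cancel₀ _ hr0.ne'] at this
  have hBμ1 : 1 ≤ B * μ0 := by
    have := mul_le_mul_of_nonneg_right hBμ hμ0.le
    rwa [one_div, inv_mul_cancel₀ hμ0.ne'] at this
  refine ⟨B, hBpos, r, hr0, hr1, ?_⟩
  intro k
  induction k with
  | zero => omega
  | succ k ih =>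
    intro _ n hn1
    have hun := hupos n hn1
    rcases Nat.eq_zero_or_pos k with hk0 | hk1
    · subst hk0
      rw [iterConv_one]
      have h2 : u n ≤ (B * r) * u n := by nlinarith
      calc u n ≤ (B * r) * u n := h2
        _ = B * ((0+1:ℕ):ℝ) * r^(0+1) * u n := by push_cast; ring
    · have ihk := ih hk1
      rcases le_or_gt n N0 with hsmall | hlarge
      · have h1 : iterConv u (k+1) n ≤ U^(k+1) :=
          iterConv_le hu0 hupos husum (by omega) n
        have h2 : U^(k+1) ≤ r^(k+1) := pow_le_pow_left₀ hU0.le hrU.le _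
        have hrp : (0:ℝ) < r^(k+1) := pow_pos hr0 _
        have hk1r : (1:ℝ) ≤ ((k+1:ℕ):ℝ) := by exact_mod_cast Nat.one_le_iff_ne_zero.2 (by omega)
        have h3 : (1:ℝ) ≤ B * u n := le_trans hBμ1
          (mul_le_mul_of_nonneg_left (hμmin n hn1 hsmall) hBpos.le)
        calc iterConv u (k+1) n ≤ r^(k+1) := le_trans h1 h2
          _ = 1 * 1 * r^(k+1) := by ring
          _ ≤ (B * u n) * ((k+1:ℕ):ℝ) * r^(k+1) := by
              apply mul_le_mul_of_nonneg_right _ hrp.le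
              exact mul_le_mul h3 hk1r one_pos.le (by linarith)
          _ = B * ((k+1:ℕ):ℝ) * r^(k+1) * u n := by ring
      · -- large n
        have hNn : N ≤ n := by
          have : N ≤ N0 := le_trans (le_max_left _ _) (le_max_left _ _)
          omega
        have hN2n : N2 ≤ n := by
          have : N2 ≤ N0 := le_trans (le_max_right _ _) (le_max_left _ _)
          omega
        have hTn : 2*T + 2 ≤ n := by
          have : 2*T + 2 ≤ N0 := le_max_right _ _
          omega
        rw [iterConv_succ hk1 n]
        have hsplittop : ∑ j ∈ Finset.Ico 1 n, iterConv u k j * u (n - j)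
            = (∑ j ∈ (Finset.Ico 1 n).filter (fun j => j ≤ T), iterConv u k j * u (n - j))
              + ∑ j ∈ (Finset.Ico 1 n).filter (fun j => ¬ j ≤ T), iterConv u k j * u (n - j) :=
          (Finset.sum_filter_add_sum_filter_not _ _ _).symm
        rw [hsplittop]
        have hrk : (0:ℝ) < r^k := pow_pos hr0 _
        -- first piece
        have hs1 : ∑ j ∈ (Finset.Ico 1 n).filter (fun j => j ≤ T),
            iterConv u k j * u (n - j) ≤ r^k * (C * u n) := by
          have hstep : ∀ j ∈ (Finset.Ico 1 n).filter (fun j => j ≤ T),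
              iterConv u k j * u (n - j) ≤ iterConv u k j * (C * u n) := by
            intro j hj
            rw [Finset.mem_filter, Finset.mem_Ico] at hj
            apply mul_le_mul_of_nonneg_left _ (iterConv_nonneg hu0 hupos k hk1 j)
            exact hCN n hNn (n - j) (by omega) (by omega)
          calc (∑ j ∈ (Finset.Ico 1 n).filter (fun j => j ≤ T), iterConv u k j * u (n - j))
              ≤ (∑ j ∈ (Finset.Ico 1 n).filter (fun j => j ≤ T), iterConv u k j * (C * u n)) :=
                Finset.sum_le_sum hstep
            _ = (∑ j ∈ (Finset.Ico 1 n).filter (fun j => j ≤ T), iterConv u k j) * (C * u n) :=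
                (Finset.sum_mul _ _ _).symm
            _ ≤ U^k * (C * u n) := by
                apply mul_le_mul_of_nonneg_right
                  (iterConv_sum_le hu0 hupos husum hk1 _) (mul_nonneg hCpos.le hun.le)
            _ ≤ r^k * (C * u n) := by
                apply mul_le_mul_of_nonneg_right
                  (pow_le_pow_left₀ hU0.le hrU.le _) (mul_nonneg hCpos.le hun.le)
        -- second piece
        have hs2 : ∑ j ∈ (Finset.Ico 1 n).filter (fun j => ¬ j ≤ T),
            iterConv u k j * u (n - j)
            ≤ (B * k * r^k) * ∑ j ∈ (Finset.Ico 1 n).filter (fun j => ¬ j ≤ T),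
                u j * u (n - j) := by
          rw [Finset.mul_sum]
          apply Finset.sum_le_sum
          intro j hj
          rw [Finset.mem_filter, Finset.mem_Ico] at hj
          have := ihk j hj.1.1
          calc iterConv u k j * u (n - j) ≤ (B * k * r^k * u j) * u (n - j) :=
              mul_le_mul_of_nonneg_right this (u_nonneg hu0 hupos _)
            _ = B * ↑k * r^k * (u j * u (n - j)) := by ring
        -- key bound on the convolution tail
        have hkey : ∑ j ∈ (Finset.Ico 1 n).filter (fun j => ¬ j ≤ T), u j * u (n - j)
            ≤ r * u n := by
          have hsplitsum : ∑ j ∈ (Finset.Ico 1 n).filter (fun j => ¬ j ≤ T), u j * u (n - j)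
              = (∑ j ∈ ((Finset.Ico 1 n).filter (fun j => ¬ j ≤ T)).filter
                  (fun j => 2*j ≤ n), u j * u (n - j))
                + ∑ j ∈ ((Finset.Ico 1 n).filter (fun j => ¬ j ≤ T)).filter
                  (fun j => ¬ 2*j ≤ n), u j * u (n - j) :=
            (Finset.sum_filter_add_sum_filter_not _ _ _).symm
          rw [hsplitsum]
          have ha : ∑ j ∈ ((Finset.Ico 1 n).filter (fun j => ¬ j ≤ T)).filter
              (fun j => 2*j ≤ n), u j * u (n - j) ≤ ((r-U)/2) * u n := by
            have hstep : ∀ j ∈ ((Finset.Ico 1 n).filter (fun j => ¬ j ≤ T)).filter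
                (fun j => 2*j ≤ n), u j * u (n - j) ≤ u j * (C * u n) := by
              intro j hj
              rw [Finset.mem_filter, Finset.mem_filter, Finset.mem_Ico] at hj
              apply mul_le_mul_of_nonneg_left _ (u_nonneg hu0 hupos j)
              exact hCN n hNn (n - j) (by omega) (by omega)
            calc (∑ j ∈ ((Finset.Ico 1 n).filter (fun j => ¬ j ≤ T)).filter
                (fun j => 2*j ≤ n), u j * u (n - j))
                ≤ (∑ j ∈ ((Finset.Ico 1 n).filter (fun j => ¬ j ≤ T)).filter
                    (fun j => 2*j ≤ n), u j * (C * u n)) := Finset.sum_le_sum hstep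
              _ = (∑ j ∈ ((Finset.Ico 1 n).filter (fun j => ¬ j ≤ T)).filter
                    (fun j => 2*j ≤ n), u j) * (C * u n) := (Finset.sum_mul _ _ _).symm
              _ ≤ (∑' m, u (m + T)) * (C * u n) := by
                  apply mul_le_mul_of_nonneg_right _ (mul_nonneg hCpos.le hun.le)
                  apply sum_tail_le hu0 hupos husum
                  intro j hj
                  rw [Finset.mem_filter, Finset.mem_filter, Finset.mem_Ico] at hj
                  omega
              _ ≤ ((r - U)/(2*C)) * (C * u n) := by
                  apply mul_le_mul_of_nonneg_right hTtail (mul_nonneg hCpos.le hun.le)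
              _ = ((r-U)/2) * u n := by field_simp
          have hb : ∑ j ∈ ((Finset.Ico 1 n).filter (fun j => ¬ j ≤ T)).filter
              (fun j => ¬ 2*j ≤ n), u j * u (n - j) ≤ (U + (r-U)/2) * u n := by
            have himg : ∑ j ∈ ((Finset.Ico 1 n).filter (fun j => ¬ j ≤ T)).filter
                (fun j => ¬ 2*j ≤ n), u j * u (n - j)
                = ∑ m ∈ (((Finset.Ico 1 n).filter (fun j => ¬ j ≤ T)).filter
                    (fun j => ¬ 2*j ≤ n)).image (fun j => n - j), u m * u (n - m) := by
              rw [Finset.sum_image]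
              · apply Finset.sum_congr rfl
                intro j hj
                rw [Finset.mem_filter, Finset.mem_filter, Finset.mem_Ico] at hj
                have hj' : n - (n - j) = j := by omega
                rw [hj', mul_comm]
              · intro x hx y hy hxy
                rw [Finset.mem_coe, Finset.mem_filter, Finset.mem_filter, Finset.mem_Ico] at hx hy
                have hxy' : n - x = n - y := hxy
                omega
            rw [himg]
            have hsubs : (((Finset.Ico 1 n).filter (fun j => ¬ j ≤ T)).filter
                (fun j => ¬ 2*j ≤ n)).image (fun j => n - j)
                ⊆ (Finset.Ico 1 n).filter (fun m => 2*m < n) := by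
              intro m hm
              rw [Finset.mem_image] at hm
              obtain ⟨j, hj, rfl⟩ := hm
              rw [Finset.mem_filter, Finset.mem_filter, Finset.mem_Ico] at hj
              rw [Finset.mem_filter, Finset.mem_Ico]
              omega
            calc (∑ m ∈ (((Finset.Ico 1 n).filter (fun j => ¬ j ≤ T)).filter
                (fun j => ¬ 2*j ≤ n)).image (fun j => n - j), u m * u (n - m))
                ≤ (∑ m ∈ (Finset.Ico 1 n).filter (fun m => 2*m < n), u m * u (n - m)) := by
                  apply Finset.sum_le_sum_of_subset_of_nonneg hsubs
                  intro i hi hni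
                  exact mul_nonneg (u_nonneg hu0 hupos _) (u_nonneg hu0 hupos _)
              _ = (∑' m : ℕ, (if 1 ≤ m ∧ 2*m < n then u m * u (n - m) / u n else 0)) * u n :=
                  (tsum_half_eq n hun.ne').symm
              _ ≤ (U + (r-U)/2) * u n := by
                  apply mul_le_mul_of_nonneg_right (hN2 n hN2n).le hun.le
          calc (∑ j ∈ ((Finset.Ico 1 n).filter (fun j => ¬ j ≤ T)).filter
                  (fun j => 2*j ≤ n), u j * u (n - j))
                + (∑ j ∈ ((Finset.Ico 1 n).filter (fun j => ¬ j ≤ T)).filter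
                  (fun j => ¬ 2*j ≤ n), u j * u (n - j))
              ≤ ((r-U)/2) * u n + (U + (r-U)/2) * u n := add_le_add ha hb
            _ = r * u n := by ring
        -- put the pieces together
        have hfin : r^k * (C * u n) + (B * k * r^k) * (r * u n)
            ≤ B * ((k+1:ℕ):ℝ) * r^(k+1) * u n := by
          have h1 : r^k * (C * u n) ≤ r^k * ((B * r) * u n) := by
            apply mul_le_mul_of_nonneg_left _ hrk.le
            exact mul_le_mul_of_nonneg_right hCBr hun.le
          have hknn : (0:ℝ) ≤ (k:ℝ) := Nat.cast_nonneg _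
          calc r^k * (C * u n) + (B * k * r^k) * (r * u n)
              ≤ r^k * ((B * r) * u n) + (B * k * r^k) * (r * u n) := by linarith
            _ = B * ((k:ℝ)+1) * r^(k+1) * u n := by ring
            _ = B * ((k+1:ℕ):ℝ) * r^(k+1) * u n := by push_cast; ring
        have hcomb : ∑ j ∈ (Finset.Ico 1 n).filter (fun j => ¬ j ≤ T),
            iterConv u k j * u (n - j) ≤ (B * k * r^k) * (r * u n) := by
          refine le_trans hs2 (mul_le_mul_of_nonneg_left hkey ?_)
          have hknn : (0:ℝ) ≤ (k:ℝ) := Nat.cast_nonneg _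
          positivity
        calc (∑ j ∈ (Finset.Ico 1 n).filter (fun j => j ≤ T), iterConv u k j * u (n - j))
              + (∑ j ∈ (Finset.Ico 1 n).filter (fun j => ¬ j ≤ T), iterConv u k j * u (n - j))
            ≤ r^k * (C * u n) + (B * k * r^k) * (r * u n) := add_le_add hs1 hcomb
          _ ≤ B * ((k+1:ℕ):ℝ) * r^(k+1) * u n := hfin

end Part6

/-- under the conditions of Statement 5, with
`p_n := ∑_{k=1}^n (-1)^{k+1} u_n^{*(k)}`, one has
`p_n / u_n → 1/(1+u)²` as `n → ∞`. -/
theorem stmt6 (u : ℕ → ℝ) (hu0 : u 0 = 0) (hupos : ∀ n, 1 ≤ n → 0 < u n)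
    (γ : ℝ) (hγ : 1 < γ) (hrv : RegVar u (-γ))
    (husum : Summable u) (hult : (∑' n, u n) < 1)
    (p : ℕ → ℝ)
    (hp : ∀ n, p n = ∑ k ∈ Finset.Icc 1 n, (-1 : ℝ) ^ (k + 1) * iterConv u k n) :
    Filter.Tendsto (fun n => p n / u n) Filter.atTop
      (nhds (1 / (1 + ∑' n, u n) ^ 2)) := by
  classical
  set U := ∑' n, u n with hUdef
  have hγ0 : 0 < γ := lt_trans one_pos hγ
  have hU0 : 0 < U := U_pos hu0 hupos husum
  obtain ⟨B, hB0, r, hr0, hr1, hkest⟩ := kesten hu0 hupos hγ0 hrv husum hult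
  -- representation of p n / u n as a series in k
  have hrepr : ∀ n, 1 ≤ n → p n / u n
      = ∑' k : ℕ, (if 1 ≤ k then (-1:ℝ)^(k+1) * iterConv u k n / u n else 0) := by
    intro n hn
    rw [hp n, Finset.sum_div, tsum_eq_sum (s := Finset.Icc 1 n) ?_]
    · apply Finset.sum_congr rfl
      intro k hk
      rw [Finset.mem_Icc] at hk
      rw [if_pos hk.1]
    · intro k hk
      rw [Finset.mem_Icc] at hk
      by_cases h1 : 1 ≤ k
      · rw [if_pos h1, iterConv_eq_zero hu0 k h1 n (by omega)]
        simp
      · rw [if_neg h1]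
  have hlim := iterConv_tendsto hu0 hupos hγ0 hrv husum
  -- dominated convergence in k
  have hmain : Tendsto (fun n => ∑' k : ℕ,
      (if 1 ≤ k then (-1:ℝ)^(k+1) * iterConv u k n / u n else 0)) atTop
      (𝓝 (∑' k : ℕ, (if 1 ≤ k then (-1:ℝ)^(k+1) * ((k:ℝ) * U^(k-1)) else 0))) := by
    apply tendsto_tsum_of_dominated_convergence (bound := fun k : ℕ => B * k * r^k)
    · have hs := summable_pow_mul_geometric_of_norm_lt_one 1
        (r := r) (by rw [Real.norm_eq_abs, abs_of_pos hr0]; exact hr1)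
      apply (hs.mul_left B).congr
      intro k
      simp [pow_one]
      ring
    · intro k
      by_cases h1 : 1 ≤ k
      · have h2 := (hlim k h1).const_mul ((-1:ℝ)^(k+1))
        simp only [if_pos h1]
        apply h2.congr
        intro n
        ring
      · simp only [if_neg h1]
        have hk0 : k = 0 := by omega
        subst hk0
        exact tendsto_const_nhds
    · filter_upwards [eventually_ge_atTop 1] with n hn
      intro k
      by_cases h1 : 1 ≤ k
      · rw [if_pos h1, Real.norm_eq_abs]
        have hb := hkest k h1 n hn
        have hun := hupos n hn
        have hnn0 : 0 ≤ iterConv u k n / u n :=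
          div_nonneg (iterConv_nonneg hu0 hupos k h1 n) hun.le
        have habs : |(-1:ℝ)^(k+1) * iterConv u k n / u n| = iterConv u k n / u n := by
          rw [mul_div_assoc, abs_mul, abs_pow, abs_neg, abs_one, one_pow, one_mul,
            abs_of_nonneg hnn0]
        rw [habs, div_le_iff₀ hun]
        exact hb
      · rw [if_neg h1, norm_zero]
        have hk0 : k = 0 := by omega
        subst hk0
        simp
  -- evaluate the limit series
  have hval : (∑' k : ℕ, (if 1 ≤ k then (-1:ℝ)^(k+1) * ((k:ℝ) * U^(k-1)) else 0))
      = 1/(1+U)^2 := by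
    have hnorm : ‖-U‖ < 1 := by
      rw [Real.norm_eq_abs, abs_neg, abs_of_pos hU0]
      exact hult
    have h1 : HasSum (fun j : ℕ => (j:ℝ) * (-U)^j) ((-U)/(1-(-U))^2) :=
      hasSum_coe_mul_geometric_of_norm_lt_one hnorm
    have h2 : HasSum (fun j : ℕ => (-U)^j) ((1-(-U))⁻¹) :=
      hasSum_geometric_of_norm_lt_one hnorm
    have h3 := h1.add h2
    have h5 : ∀ j : ℕ, (if 1 ≤ j+1 then (-1:ℝ)^(j+1+1) * (((j+1:ℕ):ℝ) * U^((j+1)-1)) else 0)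
        = (j:ℝ)*(-U)^j + (-U)^j := by
      intro j
      rw [if_pos (by omega)]
      have hp2 : (-1:ℝ)^(j+1+1) = (-1:ℝ)^j := by
        rw [pow_succ, pow_succ]
        ring
      rw [hp2, Nat.add_sub_cancel, neg_pow U j]
      push_cast
      ring
    have h7 : HasSum (fun j : ℕ =>
        (if 1 ≤ j+1 then (-1:ℝ)^(j+1+1) * (((j+1:ℕ):ℝ) * U^((j+1)-1)) else 0))
        ((-U)/(1-(-U))^2 + (1-(-U))⁻¹) := by
      have hfe : (fun j : ℕ =>
          (if 1 ≤ j+1 then (-1:ℝ)^(j+1+1) * (((j+1:ℕ):ℝ) * U^((j+1)-1)) else 0))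
          = fun j : ℕ => (j:ℝ)*(-U)^j + (-U)^j := funext h5
      rw [hfe]
      exact h3
    have h8 := (hasSum_nat_add_iff (f := fun k : ℕ =>
        (if 1 ≤ k then (-1:ℝ)^(k+1) * ((k:ℝ) * U^(k-1)) else 0)) 1).1 h7
    have h9 : ((-U)/(1-(-U))^2 + (1-(-U))⁻¹) + ∑ i ∈ Finset.range 1,
        (if 1 ≤ i then (-1:ℝ)^(i+1) * ((i:ℝ) * U^(i-1)) else 0) = 1/(1+U)^2 := by
      have h1U : (1+U) ≠ 0 := by linarith
      simp only [Finset.sum_range_one, if_neg (by omega : ¬ (1:ℕ) ≤ 0), add_zero]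
      rw [show (1:ℝ)-(-U) = 1+U by ring]
      field_simp
      ring
    rw [h9] at h8
    exact h8.tsum_eq
  rw [hval] at hmain
  apply Tendsto.congr' _ hmain
  filter_upwards [eventually_ge_atTop 1] with n hn
  exact (hrepr n hn).symm
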